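/- For every p ∈ (0,1), the two-point space {-1,1} with measure μ_p = p δ_1 + (1-p) δ_{-1} satisfies the logarithmic Sobolev inequality: for all nonnegative f : {-1,1} → ℝ, μ_p(f² log f²) - μ_p(f²) log μ_p(f²) ≤ -(1/(2p(1-p))) μ_p(f L f), where L f = μ_p(f) - f. -/

import Mathlib

open Real

noncomputable def twoPtExp (p : ℝ) (g : Bool → ℝ) : ℝ := p * g true + (1 - p) * g false

noncomputable def twoPtL (p : ℝ) (g : Bool → ℝ) (x : Bool) : ℝ := twoPtExp p g - g x

lemma log_le_half_aux {u : ℝ} (hu : 1 ≤ u) : Real.log u ≤ (u^2 - 1)/(2*u) := by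
  have hu0 : 0 < u := lt_of_lt_of_le one_pos hu
  set y : ℝ := (u^2 - 1)/(2*u) with hy_def
  have hy : 0 ≤ y := by
    apply div_nonneg
    · nlinarith
    · positivity
  have hy2 : 2*u*y = u^2 - 1 := by
    rw [hy_def]; field_simp
  have h1 : 1 + y + y^2/2 ≤ Real.exp y := Real.quadratic_le_exp_of_nonneg hy
  have h3 : (2*u*y)^2 = (u^2-1)^2 := by rw [hy2]
  have h2 : u ≤ 1 + y + y^2/2 := by
    nlinarith [sq_nonneg ((u-1)^2), sq_nonneg (u-1), mul_pos hu0 hu0, hy2, h3]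
  have : u ≤ Real.exp y := le_trans h2 h1
  exact (Real.log_le_iff_le_exp hu0).mpr this

lemma log_ge_half_aux {v : ℝ} (hv0 : 0 < v) (hv : v ≤ 1) : (v^2 - 1)/(2*v) ≤ Real.log v := by
  have h1v : (1:ℝ) ≤ 1/v := by
    rw [le_div_iff₀ hv0]; linarith
  have h := log_le_half_aux h1v
  have hlog : Real.log (1/v) = - Real.log v := by
    rw [one_div, Real.log_inv]
  rw [hlog] at h
  have he : ((1/v)^2 - 1)/(2*(1/v)) = -((v^2 - 1)/(2*v)) := by
    field_simp
    ring
  rw [he] at h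
  linarith

/-- Auxiliary function for the two-point entropy inequality. -/
noncomputable def entF (p b : ℝ) : ℝ → ℝ := fun x =>
  (x-b)^2/2 - (p * (x^2 * Real.log (x^2)) + (1-p) * (b^2 * Real.log (b^2))
    - (p*x^2 + (1-p)*b^2) * Real.log (p*x^2 + (1-p)*b^2))

lemma entF_hasDerivAt (p b : ℝ) {x : ℝ} (hx : 0 < x) (hm : 0 < p*x^2 + (1-p)*b^2) :
    HasDerivAt (entF p b)
      ((x-b) - 2*p*x*(Real.log (x^2) - Real.log (p*x^2 + (1-p)*b^2))) x := by
  have hx2 : (x^2 : ℝ) ≠ 0 := by positivity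
  have dsq : HasDerivAt (fun y:ℝ => y^2) (2*x) x := by
    simpa using hasDerivAt_pow 2 x
  have dlog : HasDerivAt (fun y:ℝ => Real.log (y^2)) ((2*x)/(x^2)) x := dsq.log hx2
  have d2 : HasDerivAt (fun y:ℝ => y^2 * Real.log (y^2))
      (2*x*Real.log (x^2) + x^2 * ((2*x)/(x^2))) x := dsq.mul dlog
  have dm : HasDerivAt (fun y:ℝ => p*y^2 + (1-p)*b^2) (p*(2*x)) x :=
    (dsq.const_mul p).add_const _
  have dlogm : HasDerivAt (fun y:ℝ => Real.log (p*y^2+(1-p)*b^2))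
      ((p*(2*x))/(p*x^2+(1-p)*b^2)) x := dm.log (ne_of_gt hm)
  have d3 : HasDerivAt (fun y:ℝ => (p*y^2+(1-p)*b^2) * Real.log (p*y^2+(1-p)*b^2))
      (p*(2*x)*Real.log (p*x^2+(1-p)*b^2)
        + (p*x^2+(1-p)*b^2)*((p*(2*x))/(p*x^2+(1-p)*b^2))) x := dm.mul dlogm
  have d1 : HasDerivAt (fun y:ℝ => (y-b)^2/2) (x-b) x := by
    have h := (((hasDerivAt_id x).sub_const b).pow 2).div_const 2
    refine h.congr_deriv ?_
    simp
  have dF := d1.sub (((d2.const_mul p).add_const ((1-p)*(b^2*Real.log (b^2)))).sub d3)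
  refine dF.congr_deriv ?_
  rw [show x^2*(2*x/x^2) = 2*x by field_simp, show (p*x^2+(1-p)*b^2)*(p*(2*x)/(p*x^2+(1-p)*b^2)) = p*(2*x) by field_simp [ne_of_gt hm]]
  ring

lemma entF_continuous (p b : ℝ) : Continuous (entF p b) := by
  have h1 : Continuous fun x:ℝ => x^2 * Real.log (x^2) :=
    Real.continuous_mul_log.comp (continuous_pow 2)
  have h2 : Continuous fun x:ℝ => (p*x^2+(1-p)*b^2) * Real.log (p*x^2+(1-p)*b^2) :=
    Real.continuous_mul_log.comp (by continuity)
  unfold entF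
  apply Continuous.sub
  · continuity
  · exact ((continuous_const.mul h1).add continuous_const).sub h2

lemma entF_self (p b : ℝ) : entF p b b = 0 := by
  have hm : p*b^2+(1-p)*b^2 = b^2 := by ring
  unfold entF
  rw [hm]
  ring

lemma sqrt_bound (p b x : ℝ) (hp0 : 0 < p) (hp1 : p < 1) (hb : 0 ≤ b) (hx : 0 ≤ x) :
    2*p*(1-p)*(x+b) ≤ Real.sqrt (p*x^2 + (1-p)*b^2) := by
  have hq0 : 0 < 1 - p := by linarith
  have h4 : (2*p*(1-p)*(x+b))^2 ≤ p*x^2 + (1-p)*b^2 := by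
    nlinarith [sq_nonneg (p*x-(1-p)*b), sq_nonneg (p-(1-p)), sq_nonneg (x-b), sq_nonneg (x+b),
      mul_pos hp0 hq0, mul_nonneg (mul_nonneg hp0.le hq0.le) (mul_nonneg (add_nonneg hx hb) (add_nonneg hx hb)),
      sq_nonneg ((p*x-(1-p)*b)*(p-(1-p))), sq_nonneg ((x+b)*(p-(1-p)))]
  exact (Real.le_sqrt (by positivity) (by positivity)).mpr h4

lemma entF_deriv_nonneg (p b : ℝ) (hp0 : 0 < p) (hp1 : p < 1) (hb0 : 0 < b) {x : ℝ}
    (hxb : b < x) :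
    0 ≤ (x-b) - 2*p*x*(Real.log (x^2) - Real.log (p*x^2 + (1-p)*b^2)) := by
  have hq0 : 0 < 1 - p := by linarith
  have hx : 0 < x := lt_trans hb0 hxb
  set m : ℝ := p*x^2 + (1-p)*b^2 with hm_def
  have hm : 0 < m := by positivity
  set s : ℝ := Real.sqrt m with hs_def
  have hs0 : 0 < s := Real.sqrt_pos.mpr hm
  have hs2 : s^2 = m := Real.sq_sqrt hm.le
  have hxm : m ≤ x^2 := by
    rw [hm_def]
    nlinarith [mul_pos hq0 (mul_pos (sub_pos.mpr hxb) (add_pos hx hb0))]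
  have hsx : s ≤ x := by
    rw [hs_def]
    calc Real.sqrt m ≤ Real.sqrt (x^2) := Real.sqrt_le_sqrt hxm
    _ = x := Real.sqrt_sq hx.le
  have hu1 : 1 ≤ x/s := by rw [le_div_iff₀ hs0]; linarith
  have hlog := log_le_half_aux hu1
  have e1 : Real.log (x^2) = 2*Real.log x := by
    rw [Real.log_pow]; push_cast; ring
  have e2 : Real.log m = 2*Real.log s := by
    rw [← hs2, Real.log_pow]; push_cast; ring
  have hux : Real.log (x^2) - Real.log m = 2 * Real.log (x/s) := by
    rw [Real.log_div (ne_of_gt hx) (ne_of_gt hs0), e1, e2]; ring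
  have hD : Real.log (x^2) - Real.log m ≤ (x^2 - m)/(s*x) := by
    rw [hux]
    calc 2*Real.log (x/s) ≤ 2*(((x/s)^2-1)/(2*(x/s))) := by linarith
    _ = (x^2 - m)/(s*x) := by rw [← hs2]; field_simp
  have hDm : (Real.log (x^2) - Real.log m) * (s*x) ≤ x^2 - m :=
    (le_div_iff₀ (by positivity)).mp hD
  have hsb : 2*p*(1-p)*(x+b) ≤ s := sqrt_bound p b x hp0 hp1 hb0.le hx.le
  have hxm2 : x^2 - m = (1-p)*(x^2-b^2) := by rw [hm_def]; ring
  nlinarith [hDm, mul_le_mul_of_nonneg_right hsb (sub_nonneg.mpr hxb.le), hs0, hx, hp0,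
    mul_le_mul_of_nonneg_left hDm (by positivity : (0:ℝ) ≤ 2*p), hxm2,
    mul_pos hs0 hx]


lemma entF_deriv_nonpos (p b : ℝ) (hp0 : 0 < p) (hp1 : p < 1) (hb0 : 0 < b) {x : ℝ}
    (hx : 0 < x) (hxb : x < b) :
    (x-b) - 2*p*x*(Real.log (x^2) - Real.log (p*x^2 + (1-p)*b^2)) ≤ 0 := by
  have hq0 : 0 < 1 - p := by linarith
  set m : ℝ := p*x^2 + (1-p)*b^2 with hm_def
  have hm : 0 < m := by positivity
  set s : ℝ := Real.sqrt m with hs_def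
  have hs0 : 0 < s := Real.sqrt_pos.mpr hm
  have hs2 : s^2 = m := Real.sq_sqrt hm.le
  have hxm : x^2 ≤ m := by
    rw [hm_def]
    nlinarith [mul_pos hq0 (mul_pos (sub_pos.mpr hxb) (add_pos hb0 hx))]
  have hsx : x ≤ s := by
    rw [hs_def]
    calc x = Real.sqrt (x^2) := (Real.sqrt_sq hx.le).symm
    _ ≤ Real.sqrt m := Real.sqrt_le_sqrt hxm
  have hv1 : x/s ≤ 1 := by rw [div_le_one hs0]; linarith
  have hv0 : 0 < x/s := by positivity
  have hlog := log_ge_half_aux hv0 hv1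
  have e1 : Real.log (x^2) = 2*Real.log x := by
    rw [Real.log_pow]; push_cast; ring
  have e2 : Real.log m = 2*Real.log s := by
    rw [← hs2, Real.log_pow]; push_cast; ring
  have hux : Real.log (x^2) - Real.log m = 2 * Real.log (x/s) := by
    rw [Real.log_div (ne_of_gt hx) (ne_of_gt hs0), e1, e2]; ring
  have hD : (x^2 - m)/(s*x) ≤ Real.log (x^2) - Real.log m := by
    rw [hux]
    calc (x^2 - m)/(s*x) = 2*(((x/s)^2-1)/(2*(x/s))) := by rw [← hs2]; field_simp
    _ ≤ 2*Real.log (x/s) := by linarith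
  have hDm : x^2 - m ≤ (Real.log (x^2) - Real.log m) * (s*x) :=
    (div_le_iff₀ (by positivity)).mp hD
  have hsb : 2*p*(1-p)*(x+b) ≤ s := sqrt_bound p b x hp0 hp1 hb0.le hx.le
  have hxm2 : x^2 - m = (1-p)*(x^2-b^2) := by rw [hm_def]; ring
  nlinarith [hDm, mul_le_mul_of_nonneg_right hsb (sub_nonneg.mpr hxb.le), hs0, hx, hp0,
    mul_le_mul_of_nonneg_left hDm (by positivity : (0:ℝ) ≤ 2*p), hxm2,
    mul_pos hs0 hx]

lemma twoPointEnt (p a b : ℝ) (hp0 : 0 < p) (hp1 : p < 1) (ha : 0 ≤ a) (hb : 0 ≤ b) :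
    p * (a^2 * Real.log (a^2)) + (1-p) * (b^2 * Real.log (b^2))
      - (p*a^2 + (1-p)*b^2) * Real.log (p*a^2 + (1-p)*b^2) ≤ (a-b)^2/2 := by
  have hq0 : 0 < 1 - p := by linarith
  rcases eq_or_lt_of_le hb with hb0 | hb0
  · -- b = 0 case
    rw [← hb0]
    rcases eq_or_lt_of_le ha with ha0 | ha0
    · rw [← ha0]; norm_num
    · have ha2 : (0:ℝ) < a^2 := by positivity
      have hlm : Real.log (p*a^2 + (1-p)*0^2) = Real.log p + Real.log (a^2) := by
        rw [show p*a^2 + (1-p)*0^2 = p * a^2 by ring, Real.log_mul (ne_of_gt hp0) (ne_of_gt ha2)]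
      rw [hlm]
      -- reduces to -p * a^2 * log p ≤ a^2/2, i.e. -p log p ≤ 1/2
      have hkey : -Real.log p ≤ 1/(2*p) := by
        set s : ℝ := Real.sqrt p with hs_def
        have hs0 : 0 < s := Real.sqrt_pos.mpr hp0
        have hs2 : s^2 = p := Real.sq_sqrt hp0.le
        have hlogp : Real.log p = 2 * Real.log s := by
          rw [← hs2, Real.log_pow]; push_cast; ring
        have h1 : Real.log (1/s) ≤ 1/s - 1 := Real.log_le_sub_one_of_pos (by positivity)
        rw [one_div, Real.log_inv] at h1
        -- -log s ≤ 1/s - 1 ; hence -log p = -2 log s ≤ 2(1-s)/s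
        rw [hlogp]
        have h1' : s * (-Real.log s) ≤ 1 - s := by
          have h2 := mul_le_mul_of_nonneg_left h1 hs0.le
          rw [mul_sub, mul_inv_cancel₀ (ne_of_gt hs0)] at h2
          linarith
        rw [le_div_iff₀ (by positivity)]
        nlinarith [sq_nonneg (2*s - 1), mul_le_mul_of_nonneg_left h1' (by positivity : (0:ℝ) ≤ 4*s), hs2]
      have hpa : 0 ≤ p * a^2 := by positivity
      have := mul_le_mul_of_nonneg_left hkey hpa
      rw [le_div_iff₀ (by positivity : (0:ℝ) < 2*p)] at hkey
      nlinarith [hkey, sq_nonneg a]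
  · -- b > 0 case
    have hmx : ∀ x : ℝ, 0 < p*x^2 + (1-p)*b^2 := fun x => by positivity
    have hcont := entF_continuous p b
    have mono : MonotoneOn (entF p b) (Set.Ici b) := by
      apply monotoneOn_of_deriv_nonneg (convex_Ici b) hcont.continuousOn
      · intro x hx
        rw [interior_Ici] at hx
        exact ((entF_hasDerivAt p b (lt_trans hb0 hx) (hmx x)).differentiableAt).differentiableWithinAt
      · intro x hx
        rw [interior_Ici] at hx
        rw [(entF_hasDerivAt p b (lt_trans hb0 hx) (hmx x)).deriv]
        exact entF_deriv_nonneg p b hp0 hp1 hb0 hx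
    have anti : AntitoneOn (entF p b) (Set.Icc 0 b) := by
      apply antitoneOn_of_deriv_nonpos (convex_Icc 0 b) hcont.continuousOn
      · intro x hx
        rw [interior_Icc] at hx
        exact ((entF_hasDerivAt p b hx.1 (hmx x)).differentiableAt).differentiableWithinAt
      · intro x hx
        rw [interior_Icc] at hx
        rw [(entF_hasDerivAt p b hx.1 (hmx x)).deriv]
        exact entF_deriv_nonpos p b hp0 hp1 hb0 hx.1 hx.2
    have hFa : 0 ≤ entF p b a := by
      rcases le_total a b with hab | hab
      · have h := anti ⟨ha, hab⟩ ⟨hb, le_refl b⟩ hab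
        rw [entF_self] at h
        exact h
      · have h := mono (Set.self_mem_Ici) hab hab
        rw [entF_self] at h
        exact h
    unfold entF at hFa
    linarith

theorem stmt6 (p : ℝ) (hp : p ∈ Set.Ioo (0:ℝ) 1) (f : Bool → ℝ) (hf : ∀ x, 0 ≤ f x) :
    twoPtExp p (fun x => f x ^ 2 * Real.log (f x ^ 2))
      - twoPtExp p (fun x => f x ^ 2) * Real.log (twoPtExp p (fun x => f x ^ 2))
      ≤ -(1 / (2 * p * (1 - p))) * twoPtExp p (fun x => f x * twoPtL p f x) := by
  obtain ⟨hp0, hp1⟩ := hp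
  have hq0 : 0 < 1 - p := by linarith
  have key := twoPointEnt p (f true) (f false) hp0 hp1 (hf true) (hf false)
  simp only [twoPtExp, twoPtL]
  refine le_trans (le_of_eq ?_) (le_trans key (le_of_eq ?_))
  · ring
  · field_simp
    ring
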